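/- arXiv:1709.04048 — 2 statements merged into one kernel-verified Lean document; each statement's English description precedes it below -/
import Mathlib

section
/- For every item x and every time t, the Unbiased Space Saving sketch gives an unbiased estimate of the count of x: E[N̂_x(t)] = E[n_x(t)] (in particular, for a deterministic input stream, E[N̂_x(t)] = n_x(t)), where the expectation is over the randomness of the label-replacement coin flips. -/
open MeasureTheory ProbabilityTheory Filter

/-- The state of a Space Saving sketch with `m` bins: each bin holds an
optional label (`none` = no label yet) and a count. -/
abbrev SSState (m : ℕ) := Fin m → Option ℕ × ℕ

/-- Initial state: all bins unlabeled with count 0. -/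
def initState (m : ℕ) : SSState m := fun _ => (none, 0)

/-- The minimal bin count `N̂_min` (0 when `m = 0`). -/
noncomputable def minCount {m : ℕ} (s : SSState m) : ℕ := ⨅ j, (s j).2

/-- The maximal bin count `N̂_max` (0 when `m = 0`). -/
noncomputable def maxCount {m : ℕ} (s : SSState m) : ℕ := ⨆ j, (s j).2

/-- Select a bin of minimal count using the tie-breaking randomness `v`:
among the `k` bins of minimal count (sorted by index), the one of rank
`⌊v * k⌋` (clamped) is chosen; this is a uniformly random choice among the
tied bins when `v` is uniform on `[0,1)`.  Returns `none` iff `m = 0`. -/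
noncomputable def pickMin {m : ℕ} (s : SSState m) (v : ℝ) : Option (Fin m) :=
  let l := (Finset.univ.filter fun j => ∀ k, (s j).2 ≤ (s k).2).sort (· ≤ ·)
  l[min (⌊v * l.length⌋.toNat) (l.length - 1)]?

/-- One step of the (Unbiased) Space Saving update upon arrival of item `x`,
with label-replacement randomness `u` and tie-breaking randomness `v`.
If `x` is a label of the sketch, its bin's count is incremented; otherwise a
minimal bin (count `N̂_min`) is selected, its count is incremented, and its
label is replaced by `x` iff `u < 1/(N̂_min + 1)` (so a uniform `u` on `[0,1)`
replaces the label with probability `1/(N̂_min+1)`; taking `u = 0` makes the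
replacement always happen, which is the Deterministic Space Saving update). -/
noncomputable def ssUpdate {m : ℕ} (x : ℕ) (u v : ℝ) (s : SSState m) : SSState m :=
  if ∃ j, (s j).1 = some x then
    fun j => if (s j).1 = some x then (some x, (s j).2 + 1) else s j
  else
    match pickMin s v with
    | none => s
    | some j₀ =>
        Function.update s j₀
          ((if u < 1 / (((s j₀).2 : ℝ) + 1) then some x else (s j₀).1), (s j₀).2 + 1)

/-- The sketch state after `t` stream elements, where the `r`-th element
(0-indexed) is `x r`, with randomness sequences `u` (label replacement)
and `v` (tie breaking). -/
noncomputable def ssRun (m : ℕ) (x : ℕ → ℕ) (u v : ℕ → ℝ) : ℕ → SSState m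
  | 0 => initState m
  | t + 1 => ssUpdate (x t) (u t) (v t) (ssRun m x u v t)

/-- Estimated count `N̂_i` of item `i`: the count of the bin labeled `i`,
or `0` if no bin is labeled `i`. -/
def ssEst {m : ℕ} (s : SSState m) (i : ℕ) : ℕ :=
  ∑ j, if (s j).1 = some i then (s j).2 else 0

/-- `Z_i = 1`: item `i` is one of the labels of the sketch. -/
def isLabel {m : ℕ} (s : SSState m) (i : ℕ) : Prop := ∃ j, (s j).1 = some i

/-- True count `n_i(t)` of item `i` among the first `t` stream elements. -/
def trueCount (x : ℕ → ℕ) (i t : ℕ) : ℕ :=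
  ((Finset.range t).filter fun r => x r = i).card

/-- The uniform distribution on `[0,1)`. -/
noncomputable def unif01 : Measure ℝ := volume.restrict (Set.Ico (0:ℝ) 1)

/-- The law on `ℕ` of a discrete item distribution with probabilities `p`. -/
noncomputable def itemLaw (p : ℕ → ℝ) : Measure ℕ :=
  Measure.sum fun i => ENNReal.ofReal (p i) • Measure.dirac i

instance (α : Type*) : MeasurableSpace (Option α) := ⊤
instance (α : Type*) : MeasurableSingletonClass (Option α) := ⟨fun _ => trivial⟩

instance : IsProbabilityMeasure unif01 := ⟨by simp [unif01, Real.volume_Ico]⟩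

lemma unif01_Iio {r : ℝ} (h0 : 0 ≤ r) (h1 : r ≤ 1) : unif01 (Set.Iio r) = ENNReal.ofReal r := by
  rw [unif01, Measure.restrict_apply measurableSet_Iio]
  have h : Set.Iio r ∩ Set.Ico (0:ℝ) 1 = Set.Ico 0 r := by
    ext y
    simp only [Set.mem_inter_iff, Set.mem_Iio, Set.mem_Ico]
    constructor
    · rintro ⟨h, h0', _⟩; exact ⟨h0', h⟩
    · rintro ⟨h0', h⟩; exact ⟨h, h0', lt_of_lt_of_le h h1⟩
  rw [h, Real.volume_Ico, sub_zero]

lemma integral_ite_lt (r A B : ℝ) (h0 : 0 ≤ r) (h1 : r ≤ 1) :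
    ∫ u, (if u < r then A else B) ∂unif01 = r * A + (1 - r) * B := by
  have hind : (fun u => if u < r then A else B)
      = fun u => B + Set.indicator (Set.Iio r) (fun _ => A - B) u := by
    funext u
    by_cases h : u < r
    · simp [Set.indicator_apply, Set.mem_Iio, h]
    · simp [Set.indicator_apply, Set.mem_Iio, h]
  rw [hind, integral_add (integrable_const _)
    ((integrable_const _).indicator measurableSet_Iio),
    integral_const, integral_indicator_const _ measurableSet_Iio, measureReal_def, measureReal_def,
    unif01_Iio h0 h1]
  simp only [measure_univ, ENNReal.toReal_one, one_smul, smul_eq_mul,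
    ENNReal.toReal_ofReal h0]
  ring


lemma pickMin_eq_some {m : ℕ} (hm : 0 < m) (s : SSState m) (v : ℝ) :
    ∃ j₀, pickMin s v = some j₀ := by
  classical
  obtain ⟨j, -, hj⟩ := Finset.exists_min_image Finset.univ (fun j => (s j).2)
    ⟨⟨0, hm⟩, Finset.mem_univ _⟩
  set l := (Finset.univ.filter fun j : Fin m => ∀ k, (s j).2 ≤ (s k).2).sort (· ≤ ·) with hl
  have hjl : j ∈ l := by
    rw [hl, Finset.mem_sort]
    simp only [Finset.mem_filter, Finset.mem_univ, true_and]
    exact fun k => hj k (Finset.mem_univ _)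
  have hlen : 0 < l.length := List.length_pos_iff.mpr (List.ne_nil_of_mem hjl)
  have hidx : min (⌊v * l.length⌋.toNat) (l.length - 1) < l.length :=
    lt_of_le_of_lt (min_le_right _ _) (Nat.sub_lt hlen one_pos)
  exact ⟨l.get ⟨_, hidx⟩, List.getElem?_eq_getElem hidx⟩

lemma measurable_pickMin {m : ℕ} (s : SSState m) : Measurable (pickMin s) := by
  classical
  set l := (Finset.univ.filter fun j : Fin m => ∀ k, (s j).2 ≤ (s k).2).sort (· ≤ ·) with hl
  have h : pickMin s = (fun n : ℤ => l[min n.toNat (l.length - 1)]?)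
      ∘ (fun v : ℝ => ⌊v * (l.length : ℝ)⌋) := rfl
  rw [h]
  exact measurable_from_top.comp ((measurable_id.mul_const _).floor)

noncomputable def upd2 {m : ℕ} (b : ℕ) (s : SSState m) (p : ℝ × Option (Fin m)) : SSState m :=
  match p.2 with
  | none => s
  | some j₀ => Function.update s j₀
      ((if p.1 < 1 / (((s j₀).2 : ℝ) + 1) then some b else (s j₀).1), (s j₀).2 + 1)

lemma measurable_upd2 {m : ℕ} (b : ℕ) (s : SSState m) : Measurable (upd2 b s) := by
  apply measurable_from_prod_countable_left
  intro o
  cases o with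
  | none => exact measurable_const
  | some j₀ =>
    have h : (fun u : ℝ => upd2 b s (u, some j₀))
        = fun u => if u < 1 / (((s j₀).2 : ℝ) + 1)
            then Function.update s j₀ (some b, (s j₀).2 + 1)
            else Function.update s j₀ ((s j₀).1, (s j₀).2 + 1) := by
      funext u
      simp only [upd2]
      split_ifs <;> rfl
    rw [h]
    exact Measurable.ite measurableSet_Iio measurable_const measurable_const

lemma measurable_ssUpdate_left {m : ℕ} (b : ℕ) (s : SSState m) :
    Measurable fun w : ℝ × ℝ => ssUpdate b w.1 w.2 s := by
  classical
  by_cases h : ∃ j, (s j).1 = some b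
  · have he : (fun w : ℝ × ℝ => ssUpdate b w.1 w.2 s) = fun _ =>
        fun j => if (s j).1 = some b then (some b, (s j).2 + 1) else s j := by
      funext w; rw [ssUpdate, if_pos h]
    rw [he]; exact measurable_const
  · have he : (fun w : ℝ × ℝ => ssUpdate b w.1 w.2 s)
        = upd2 b s ∘ fun w : ℝ × ℝ => (w.1, pickMin s w.2) := by
      funext w
      show ssUpdate b w.1 w.2 s = upd2 b s (w.1, pickMin s w.2)
      rw [ssUpdate, if_neg h]
      cases hp : pickMin s w.2 <;> simp [upd2, hp]
    rw [he]
    exact (measurable_upd2 b s).comp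
      (measurable_fst.prodMk ((measurable_pickMin s).comp measurable_snd))

lemma measurable_ssUpdate_pair {m : ℕ} (b : ℕ) :
    Measurable fun p : (ℝ × ℝ) × SSState m => ssUpdate b p.1.1 p.1.2 p.2 :=
  measurable_from_prod_countable_left fun s => measurable_ssUpdate_left b s


lemma ssUpdate_eq_update {m : ℕ} {b : ℕ} {u v : ℝ} {s : SSState m} {j₀ : Fin m}
    (hex : ¬∃ j, (s j).1 = some b) (hp : pickMin s v = some j₀) :
    ssUpdate b u v s = Function.update s j₀
      ((if u < 1 / (((s j₀).2 : ℝ) + 1) then some b else (s j₀).1), (s j₀).2 + 1) := by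
  rw [ssUpdate, if_neg hex, hp]

lemma ssUpdate_eq_self {m : ℕ} {b : ℕ} {u v : ℝ} {s : SSState m}
    (hex : ¬∃ j, (s j).1 = some b) (hp : pickMin s v = none) :
    ssUpdate b u v s = s := by
  rw [ssUpdate, if_neg hex, hp]

lemma ssUpdate_of_mem {m : ℕ} {b : ℕ} (u v : ℝ) {s : SSState m}
    (hex : ∃ j, (s j).1 = some b) :
    ssUpdate b u v s = fun j => if (s j).1 = some b then (some b, (s j).2 + 1) else s j := by
  rw [ssUpdate, if_pos hex]

def SSInv {m : ℕ} (s : SSState m) : Prop :=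
  ∀ (i : ℕ) (j k : Fin m), (s j).1 = some i → (s k).1 = some i → j = k

lemma ssInv_update {m : ℕ} (b : ℕ) (u v : ℝ) {s : SSState m} (hs : SSInv s) :
    SSInv (ssUpdate b u v s) := by
  classical
  by_cases hex : ∃ j, (s j).1 = some b
  · rw [ssUpdate_of_mem u v hex]
    intro i j k hj hk
    have hlab : ∀ j : Fin m,
        ((if (s j).1 = some b then (some b, (s j).2 + 1) else s j)).1 = (s j).1 := by
      intro j; split_ifs with hb
      · rw [hb]
      · rfl
    rw [hlab] at hj hk
    exact hs i j k hj hk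
  · cases hp : pickMin s v with
    | none => rw [ssUpdate_eq_self hex hp]; exact hs
    | some j₀ =>
      rw [ssUpdate_eq_update hex hp]
      intro i j k hj hk
      by_cases hjj : j = j₀ <;> by_cases hkk : k = j₀
      · rw [hjj, hkk]
      · subst hjj
        rw [Function.update_self] at hj
        rw [Function.update_of_ne hkk] at hk
        dsimp only at hj
        split_ifs at hj with hu
        · exact absurd ⟨k, hj ▸ hk⟩ hex
        · exact hs _ _ _ hj hk
      · subst hkk
        rw [Function.update_self] at hk
        rw [Function.update_of_ne hjj] at hj
        dsimp only at hk
        split_ifs at hk with hu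
        · exact absurd ⟨j, hk ▸ hj⟩ hex
        · exact hs _ _ _ hj hk
      · rw [Function.update_of_ne hjj] at hj
        rw [Function.update_of_ne hkk] at hk
        exact hs i j k hj hk

lemma ssInv_run (m : ℕ) (x : ℕ → ℕ) (u v : ℕ → ℝ) (t : ℕ) :
    SSInv (ssRun m x u v t) := by
  induction t with
  | zero => intro i j k hj hk; simp [ssRun, initState] at hj
  | succ t ih => exact ssInv_update _ _ _ ih

lemma ssUpdate_count_le {m : ℕ} (b : ℕ) (u v : ℝ) (s : SSState m) (j : Fin m) :
    (ssUpdate b u v s j).2 ≤ (s j).2 + 1 := by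
  classical
  by_cases hex : ∃ j, (s j).1 = some b
  · rw [ssUpdate_of_mem u v hex]
    dsimp only
    split_ifs <;> simp
  · cases hp : pickMin s v with
    | none => rw [ssUpdate_eq_self hex hp]; exact Nat.le_succ _
    | some j₀ =>
      rw [ssUpdate_eq_update hex hp]
      by_cases hj : j = j₀
      · subst hj; rw [Function.update_self]
      · rw [Function.update_of_ne hj]; exact Nat.le_succ _

lemma ssRun_count_le (m : ℕ) (x : ℕ → ℕ) (u v : ℕ → ℝ) (t : ℕ) (j : Fin m) :
    (ssRun m x u v t j).2 ≤ t := by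
  induction t with
  | zero => simp [ssRun, initState]
  | succ t ih =>
    exact (ssUpdate_count_le _ _ _ _ j).trans (Nat.succ_le_succ ih)

lemma ssEst_le_sum {m : ℕ} (s : SSState m) (a : ℕ) : ssEst s a ≤ ∑ j, (s j).2 :=
  Finset.sum_le_sum fun j _ => by split <;> simp

lemma ssRun_congr (m : ℕ) (x : ℕ → ℕ) (u v u' v' : ℕ → ℝ) :
    ∀ t, (∀ r, r < t → u r = u' r ∧ v r = v' r) →
      ssRun m x u v t = ssRun m x u' v' t
  | 0, _ => rfl
  | t+1, h => by
    show ssUpdate (x t) (u t) (v t) (ssRun m x u v t) = _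
    rw [(h t (Nat.lt_succ_self t)).1, (h t (Nat.lt_succ_self t)).2,
      ssRun_congr m x u v u' v' t (fun r hr => h r (hr.trans (Nat.lt_succ_self t)))]
    rfl

lemma ssEst_update_eq {m : ℕ} (s : SSState m) (j₀ : Fin m) (p : Option ℕ × ℕ) (a : ℕ) :
    (ssEst (Function.update s j₀ p) a : ℝ)
      = (if p.1 = some a then (p.2 : ℝ) else 0)
        + ∑ j ∈ Finset.univ.erase j₀, (if (s j).1 = some a then ((s j).2 : ℝ) else 0) := by
  classical
  rw [ssEst]
  push_cast
  rw [← Finset.add_sum_erase _ _ (Finset.mem_univ j₀), Function.update_self]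
  congr 1
  refine Finset.sum_congr rfl fun j hj => ?_
  rw [Function.update_of_ne (Finset.ne_of_mem_erase hj)]


lemma ssEst_succ_of_label {m : ℕ} {s : SSState m} (hInv : SSInv s) {a : ℕ} {j₁ : Fin m}
    (hj₁ : (s j₁).1 = some a) :
    ssEst (fun j => if (s j).1 = some a then (some a, (s j).2 + 1) else s j) a
      = ssEst s a + 1 := by
  classical
  have hfilter : Finset.univ.filter (fun j => (s j).1 = some a) = {j₁} := by
    ext j
    simp only [Finset.mem_filter, Finset.mem_univ, true_and, Finset.mem_singleton]
    exact ⟨fun h => hInv a j j₁ h hj₁, fun h => h ▸ hj₁⟩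
  have h2 : ssEst (fun j => if (s j).1 = some a then (some a, (s j).2 + 1) else s j) a
      = ∑ j : Fin m, ((if (s j).1 = some a then (s j).2 else 0)
          + (if (s j).1 = some a then 1 else 0)) :=
    Finset.sum_congr rfl fun j _ => by by_cases h : (s j).1 = some a <;> simp [h]
  rw [h2, Finset.sum_add_distrib, ← Finset.card_filter, hfilter, Finset.card_singleton]
  rfl

lemma ssEst_of_label_ne {m : ℕ} (s : SSState m) {a b : ℕ} (hba : b ≠ a) :
    ssEst (fun j => if (s j).1 = some b then (some b, (s j).2 + 1) else s j) a = ssEst s a :=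
  Finset.sum_congr rfl fun j _ => by
    by_cases h : (s j).1 = some b
    · simp [h, hba]
    · simp [h]

lemma step_integral {m : ℕ} (hm : 0 < m) {s : SSState m} (hInv : SSInv s) (b a : ℕ) :
    ∫ w : ℝ × ℝ, (ssEst (ssUpdate b w.1 w.2 s) a : ℝ) ∂(unif01.prod unif01)
      = (ssEst s a : ℝ) + if b = a then 1 else 0 := by
  classical
  by_cases hex : ∃ j, (s j).1 = some b
  · have he : (fun w : ℝ × ℝ => (ssEst (ssUpdate b w.1 w.2 s) a : ℝ))
        = fun _ => (ssEst (fun j => if (s j).1 = some b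
            then (some b, (s j).2 + 1) else s j) a : ℝ) := by
      funext w; rw [ssUpdate_of_mem w.1 w.2 hex]
    rw [he, integral_const]
    simp only [measureReal_def, measure_univ, ENNReal.toReal_one, one_smul]
    by_cases hba : b = a
    · subst hba
      obtain ⟨j₁, hj₁⟩ := hex
      rw [if_pos rfl, ssEst_succ_of_label hInv hj₁]
      push_cast; ring
    · rw [if_neg hba, ssEst_of_label_ne s hba, add_zero]
  · have hbound : ∀ w : ℝ × ℝ, ssEst (ssUpdate b w.1 w.2 s) a ≤ (∑ j, (s j).2) + m := by
      intro w
      refine (ssEst_le_sum _ a).trans ?_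
      refine (Finset.sum_le_sum fun j _ => ssUpdate_count_le b w.1 w.2 s j).trans ?_
      rw [Finset.sum_add_distrib]
      simp [Finset.card_univ]
    have hFmeas : Measurable fun w : ℝ × ℝ => (ssEst (ssUpdate b w.1 w.2 s) a : ℝ) :=
      (measurable_of_countable fun s' : SSState m => (ssEst s' a : ℝ)).comp
        (measurable_ssUpdate_left b s)
    have hInt : Integrable (fun w : ℝ × ℝ => (ssEst (ssUpdate b w.1 w.2 s) a : ℝ))
        (unif01.prod unif01) := by
      refine (integrable_const (((∑ j, (s j).2) + m : ℕ) : ℝ)).mono'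
        hFmeas.aestronglyMeasurable (ae_of_all _ fun w => ?_)
      rw [Real.norm_of_nonneg (Nat.cast_nonneg _)]
      exact_mod_cast hbound w
    have hform : ∀ v : ℝ, (∫ u, (ssEst (ssUpdate b u v s) a : ℝ) ∂unif01)
        = (ssEst s a : ℝ) + if b = a then 1 else 0 := by
      intro v
      obtain ⟨j₀, hj₀⟩ := pickMin_eq_some hm s v
      have hc1 : (0:ℝ) < ((s j₀).2 : ℝ) + 1 := by positivity
      set R : ℝ := ∑ j ∈ Finset.univ.erase j₀,
        (if (s j).1 = some a then ((s j).2 : ℝ) else 0) with hR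
      have hsR : (ssEst s a : ℝ) = (if (s j₀).1 = some a then ((s j₀).2 : ℝ) else 0) + R := by
        have h := ssEst_update_eq s j₀ (s j₀) a
        rwa [Function.update_eq_self] at h
      have hrew : (fun u : ℝ => (ssEst (ssUpdate b u v s) a : ℝ))
          = fun u => if u < 1 / (((s j₀).2 : ℝ) + 1)
              then ((if b = a then ((s j₀).2 : ℝ) + 1 else 0) + R)
              else ((if (s j₀).1 = some a then ((s j₀).2 : ℝ) + 1 else 0) + R) := by
        funext u
        rw [ssUpdate_eq_update hex hj₀]
        by_cases hu : u < 1 / (((s j₀).2 : ℝ) + 1)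
        · rw [if_pos hu, if_pos hu, ssEst_update_eq]
          congr 1
          · by_cases hba : b = a <;> simp [hba]
        · rw [if_neg hu, if_neg hu, ssEst_update_eq]
          congr 1
          · by_cases hl : (s j₀).1 = some a <;> simp [hl]
      rw [hrew, integral_ite_lt _ _ _ (by positivity)
        (by rw [div_le_one hc1]; linarith [Nat.cast_nonneg (α := ℝ) (s j₀).2])]
      rw [hsR]
      by_cases hba : b = a
      · have hR0 : R = 0 := Finset.sum_eq_zero fun j _ =>
          if_neg (fun h => hex ⟨j, by rw [hba]; exact h⟩)
        have hl : ¬ (s j₀).1 = some a := fun h => hex ⟨j₀, by rw [hba]; exact h⟩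
        rw [if_pos hba, if_pos hba, if_neg hl, if_neg hl, hR0]
        field_simp
        ring
      · rw [if_neg hba, if_neg hba]
        by_cases hl : (s j₀).1 = some a
        · rw [if_pos hl, if_pos hl]
          field_simp
          ring
        · rw [if_neg hl, if_neg hl]
          ring
    rw [integral_prod_symm _ hInt]
    calc (∫ v, ∫ u, (ssEst (ssUpdate b u v s) a : ℝ) ∂unif01 ∂unif01)
        = ∫ _v, ((ssEst s a : ℝ) + if b = a then 1 else 0) ∂unif01 :=
          integral_congr_ae (ae_of_all _ hform)
      _ = (ssEst s a : ℝ) + if b = a then 1 else 0 := by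
          rw [integral_const]; simp

lemma measurable_runSeq (m : ℕ) (x : ℕ → ℕ) (t : ℕ) :
    Measurable fun y : ℕ → ℝ × ℝ => ssRun m x (fun r => (y r).1) (fun r => (y r).2) t := by
  induction t with
  | zero => exact measurable_const
  | succ t ih =>
    exact (measurable_ssUpdate_pair (x t)).comp ((measurable_pi_apply t).prodMk ih)



noncomputable def extFn (t : ℕ) (g : ↥(Finset.range t) → ℝ × ℝ) : ℕ → ℝ × ℝ :=
  fun r => if h : r ∈ Finset.range t then g ⟨r, h⟩ else (0, 0)

lemma measurable_extFn (t : ℕ) : Measurable (extFn t) := by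
  refine measurable_pi_lambda _ fun r => ?_
  by_cases h : r ∈ Finset.range t
  · simp only [extFn, dif_pos h]
    exact measurable_pi_apply _
  · simp only [extFn, dif_neg h]
    exact measurable_const

/-- Theorem 1 of the paper.  For any item `a` and any time
`t`, Unbiased Space Saving gives an unbiased estimate of the count of `a`:
for a (deterministic) input stream `x`, `E[N̂_a(t)] = n_a(t)`, the expectation
being over the i.i.d. uniform label-replacement and tie-breaking randomness. -/
theorem unbiased_space_saving_is_unbiased
    {Ω : Type*} [MeasurableSpace Ω] (P : Measure Ω) [IsProbabilityMeasure P]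
    (m : ℕ) (hm : 0 < m)
    (U V : ℕ → Ω → ℝ)
    (hmeas : ∀ t, Measurable fun ω => (U t ω, V t ω))
    (hindep : iIndepFun (fun t ω => (U t ω, V t ω)) P)
    (hlaw : ∀ t, Measure.map (fun ω => (U t ω, V t ω)) P = unif01.prod unif01)
    (x : ℕ → ℕ) (a : ℕ) (t : ℕ) :
    ∫ ω, (ssEst (ssRun m x (fun r => U r ω) (fun r => V r ω) t) a : ℝ) ∂P
      = trueCount x a t := by
  classical
  induction t with
  | zero => simp [ssRun, initState, ssEst, trueCount]
  | succ t ih =>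
    set S : Ω → SSState m := fun ω => ssRun m x (fun r => U r ω) (fun r => V r ω) t with hSdef
    set W : Ω → ℝ × ℝ := fun ω => (U t ω, V t ω) with hWdef
    have hSmeas : Measurable S :=
      (measurable_runSeq m x t).comp (measurable_pi_lambda _ fun r => hmeas r)
    have hWmeas : Measurable W := hmeas t
    have hψmeas : Measurable fun g : ↥(Finset.range t) → ℝ × ℝ =>
        ssRun m x (fun r => (extFn t g r).1) (fun r => (extFn t g r).2) t :=
      (measurable_runSeq m x t).comp (measurable_extFn t)
    have h1 := hindep.indepFun_finset {t} (Finset.range t)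
      (by simp [Finset.disjoint_left]) hmeas
    have h2 := h1.comp (φ := fun g : ↥({t} : Finset ℕ) → ℝ × ℝ =>
        g ⟨t, Finset.mem_singleton_self t⟩)
      (ψ := fun g => ssRun m x (fun r => (extFn t g r).1) (fun r => (extFn t g r).2) t)
      (show Measurable (fun g : ↥({t} : Finset ℕ) → ℝ × ℝ => g ⟨t, Finset.mem_singleton_self t⟩)
        from measurable_pi_apply _) hψmeas
    have hψeq : ((fun g : ↥(Finset.range t) → ℝ × ℝ =>
        ssRun m x (fun r => (extFn t g r).1) (fun r => (extFn t g r).2) t)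
        ∘ (fun ω (i : (Finset.range t : Finset ℕ)) => (U (i : ℕ) ω, V (i : ℕ) ω))) = S := by
      funext ω
      refine ssRun_congr m x _ _ _ _ t fun r hr => ?_
      have h : r ∈ Finset.range t := Finset.mem_range.mpr hr
      constructor <;> simp [extFn, Finset.mem_range, hr]
    have hindepWS : IndepFun W S P := by
      rw [← hψeq]
      exact h2
    have hmapWS : P.map (fun ω => (W ω, S ω)) = (unif01.prod unif01).prod (P.map S) := by
      rw [← hlaw t]
      exact (indepFun_iff_map_prod_eq_prod_map_map hWmeas.aemeasurable
        hSmeas.aemeasurable).mp hindepWS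
    haveI hLprob : IsProbabilityMeasure (P.map S) :=
      Measure.isProbabilityMeasure_map hSmeas.aemeasurable
    have hFmeas : Measurable fun p : (ℝ × ℝ) × SSState m =>
        (ssEst (ssUpdate (x t) p.1.1 p.1.2 p.2) a : ℝ) :=
      (measurable_of_countable fun s' : SSState m => (ssEst s' a : ℝ)).comp
        (measurable_ssUpdate_pair (x t))
    have hchange : ∫ ω, (ssEst (ssRun m x (fun r => U r ω) (fun r => V r ω) (t+1)) a : ℝ) ∂P
        = ∫ p : (ℝ × ℝ) × SSState m, (ssEst (ssUpdate (x t) p.1.1 p.1.2 p.2) a : ℝ)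
            ∂((unif01.prod unif01).prod (P.map S)) := by
      rw [← hmapWS, integral_map (hWmeas.prodMk hSmeas).aemeasurable
        hFmeas.aestronglyMeasurable]
      rfl
    have hInvae : ∀ᵐ s' ∂(P.map S), SSInv s' := by
      rw [ae_map_iff hSmeas.aemeasurable ((Set.to_countable _).measurableSet)]
      exact ae_of_all _ fun ω => ssInv_run m x _ _ t
    have hBndae : ∀ᵐ s' ∂(P.map S), ∀ j, (s' j).2 ≤ t := by
      rw [ae_map_iff hSmeas.aemeasurable ((Set.to_countable _).measurableSet)]
      exact ae_of_all _ fun ω j => ssRun_count_le m x _ _ t j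
    have hBndprod : ∀ᵐ p : (ℝ × ℝ) × SSState m ∂((unif01.prod unif01).prod (P.map S)),
        ∀ j, ((p.2 : SSState m) j).2 ≤ t := by
      have h0 : (P.map S) {s' : SSState m | ¬ ∀ j, (s' j).2 ≤ t} = 0 := ae_iff.mp hBndae
      have hset : {p : (ℝ × ℝ) × SSState m | ¬ ∀ j, (p.2 j).2 ≤ t}
          = Set.univ ×ˢ {s' : SSState m | ¬ ∀ j, (s' j).2 ≤ t} := by
        ext p; simp
      rw [ae_iff, hset, Measure.prod_prod, h0, mul_zero]
    have hFint : Integrable (fun p : (ℝ × ℝ) × SSState m =>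
        (ssEst (ssUpdate (x t) p.1.1 p.1.2 p.2) a : ℝ))
        ((unif01.prod unif01).prod (P.map S)) := by
      refine (integrable_const ((m * t + m : ℕ) : ℝ)).mono'
        hFmeas.aestronglyMeasurable (hBndprod.mono fun p hp => ?_)
      rw [Real.norm_of_nonneg (Nat.cast_nonneg _)]
      have h1' : ssEst (ssUpdate (x t) p.1.1 p.1.2 p.2) a ≤ (∑ j, (p.2 j).2) + m := by
        refine (ssEst_le_sum _ a).trans ?_
        refine (Finset.sum_le_sum fun j _ => ssUpdate_count_le (x t) p.1.1 p.1.2 p.2 j).trans ?_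
        rw [Finset.sum_add_distrib]
        simp [Finset.card_univ]
      have h2' : (∑ j, (p.2 j).2) ≤ m * t := by
        calc (∑ j, (p.2 j).2) ≤ ∑ _j : Fin m, t := Finset.sum_le_sum fun j _ => hp j
          _ = m * t := by simp [Finset.sum_const, Finset.card_univ, smul_eq_mul]
      exact_mod_cast h1'.trans (Nat.add_le_add_right h2' m)
    have hinner : ∀ᵐ s' ∂(P.map S),
        (∫ w : ℝ × ℝ, (ssEst (ssUpdate (x t) w.1 w.2 s') a : ℝ) ∂(unif01.prod unif01))
          = (ssEst s' a : ℝ) + if x t = a then 1 else 0 :=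
      hInvae.mono fun s' hs' => step_integral hm hs' (x t) a
    have hEstInt : Integrable (fun s' : SSState m => (ssEst s' a : ℝ)) (P.map S) := by
      refine (integrable_const ((m * t : ℕ) : ℝ)).mono'
        (measurable_of_countable _).aestronglyMeasurable (hBndae.mono fun s' hs' => ?_)
      rw [Real.norm_of_nonneg (Nat.cast_nonneg _)]
      have hb : ssEst s' a ≤ m * t := (ssEst_le_sum _ a).trans
        (by calc (∑ j, (s' j).2) ≤ ∑ _j : Fin m, t := Finset.sum_le_sum fun j _ => hs' j
              _ = m * t := by simp [Finset.sum_const, Finset.card_univ, smul_eq_mul])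
      exact_mod_cast hb
    rw [hchange, integral_prod_symm _ hFint]
    have hmapback : (∫ s' : SSState m, (ssEst s' a : ℝ) ∂(P.map S)) = (trueCount x a t : ℝ) := by
      rw [integral_map hSmeas.aemeasurable (measurable_of_countable _).aestronglyMeasurable]
      exact ih
    have htc : (trueCount x a (t+1) : ℝ) = (trueCount x a t : ℝ) + if x t = a then 1 else 0 := by
      unfold trueCount
      rw [Finset.range_add_one, Finset.filter_insert]
      by_cases h : x t = a
      · rw [if_pos h, if_pos h, Finset.card_insert_of_notMem (by simp)]
        push_cast; ring
      · rw [if_neg h, if_neg h, add_zero]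
    have hgoal1 : (∫ s' : SSState m, ∫ w : ℝ × ℝ,
        (ssEst (ssUpdate (x t) w.1 w.2 s') a : ℝ) ∂(unif01.prod unif01) ∂(P.map S))
        = (trueCount x a (t+1) : ℝ) := by
      rw [integral_congr_ae hinner, integral_add hEstInt (integrable_const _), integral_const,
        hmapback, htc]
      simp
    exact hgoal1
end

section
/- The worst-case inclusion probability bound π_i ≥ 1 − (1 − n_i/n_tot)^m for Unbiased Space Saving is tight: if m divides both n_i and n_tot, then for the sequence consisting of n_tot − n_i pairwise distinct items (each different from i) followed by n_i consecutive copies of item i, the probability that item i is a label of the sketch at the end is exactly 1 − (1 − n_i/n_tot)^m. -/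
open MeasureTheory ProbabilityTheory Filter

lemma min_count_eq (hm : 0 < m) {s : SSState m} {t : ℕ}
    (hsum : ∑ j, (s j).2 = t) (hbal : ∀ j k, (s j).2 ≤ (s k).2 + 1)
    {j0 : Fin m} (hmin : ∀ k, (s j0).2 ≤ (s k).2) : (s j0).2 = t / m := by
  set μ := (s j0).2 with hμ
  have h1 : m * μ ≤ t := by
    rw [← hsum]
    have := Finset.card_nsmul_le_sum Finset.univ (fun k => (s k).2) μ
      (fun k _ => hmin k)
    simpa [mul_comm] using this
  have h2 : t < (μ + 1) * m := by
    rw [← hsum]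
    have hsplit : ∑ j, (s j).2 = (s j0).2 + ∑ j ∈ Finset.univ \ {j0}, (s j).2 := by
      rw [← Finset.sum_update_of_mem (Finset.mem_univ j0)]
      congr 1
      ext j
      by_cases hj : j = j0 <;> simp [hj]
    rw [hsplit]
    have hrest : ∑ j ∈ Finset.univ \ {j0}, (s j).2 ≤ (Finset.univ \ {j0}).card * (μ + 1) := by
      have := Finset.sum_le_card_nsmul (Finset.univ \ {j0}) (fun k => (s k).2) (μ + 1)
        (fun k _ => hbal k j0)
      simpa using this
    have hcard : (Finset.univ \ {j0}).card = m - 1 := by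
      simp [Finset.card_sdiff, Finset.card_univ]
    rw [hcard] at hrest
    have : μ + (m - 1) * (μ + 1) < (μ + 1) * m := by
      cases m with
      | zero => omega
      | succ n => simp [Nat.succ_sub_one]; nlinarith
    omega
  rw [eq_comm]
  exact Nat.div_eq_of_lt_le (by rwa [mul_comm] at h1) h2

lemma all_counts_eq (hm : 0 < m) {s : SSState m} {a : ℕ}
    (hsum : ∑ j, (s j).2 = m * a) (hge : ∀ k, a ≤ (s k).2) : ∀ j, (s j).2 = a := by
  intro j
  by_contra hj
  have hj' : a + 1 ≤ (s j).2 := lt_of_le_of_ne (hge j) (Ne.symm hj)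
  have hsplit : ∑ k, (s k).2 = (s j).2 + ∑ k ∈ Finset.univ \ {j}, (s k).2 := by
    rw [← Finset.sum_update_of_mem (Finset.mem_univ j)]
    congr 1
    ext k
    by_cases hk : k = j <;> simp [hk]
  have hrest : (Finset.univ \ {j}).card * a ≤ ∑ k ∈ Finset.univ \ {j}, (s k).2 := by
    have := Finset.card_nsmul_le_sum (Finset.univ \ {j}) (fun k => (s k).2) a
      (fun k _ => hge k)
    simpa using this
  have hcard : (Finset.univ \ {j}).card = m - 1 := by
    simp [Finset.card_sdiff, Finset.card_univ]
  rw [hcard] at hrest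
  have : m * a < ∑ k, (s k).2 := by
    rw [hsplit]
    have : m * a ≤ (m-1) * a + a := by cases m with | zero => omega | succ n => simp [Nat.succ_sub_one]; ring_nf; omega
    omega
  omega

lemma update_sum (hm : 0 < m) {s : SSState m} {t : ℕ}
    (hsum : ∑ j, (s j).2 = t) (j0 : Fin m) (lab : Option ℕ) :
    ∑ j, (Function.update s j0 (lab, (s j0).2 + 1) j).2 = t + 1 := by
  have : ∑ j, (Function.update s j0 (lab, (s j0).2 + 1) j).2
      = ∑ j, Function.update (fun j => (s j).2) j0 ((s j0).2 + 1) j := by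
    apply Finset.sum_congr rfl
    intro j _
    by_cases hj : j = j0 <;> simp [hj, Function.update_apply]
  rw [this, Finset.sum_update_of_mem (Finset.mem_univ j0)]
  have hsplit : ∑ j, (s j).2 = (s j0).2 + ∑ j ∈ Finset.univ \ {j0}, (s j).2 := by
    rw [← Finset.sum_update_of_mem (Finset.mem_univ j0)]
    congr 1
    ext j
    by_cases hj : j = j0 <;> simp [hj]
  omega

lemma update_bal {s : SSState m} (hbal : ∀ j k, (s j).2 ≤ (s k).2 + 1)
    {j0 : Fin m} (hmin : ∀ k, (s j0).2 ≤ (s k).2) (lab : Option ℕ) :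
    ∀ j k, (Function.update s j0 (lab, (s j0).2 + 1) j).2
      ≤ (Function.update s j0 (lab, (s j0).2 + 1) k).2 + 1 := by
  intro j k
  rcases eq_or_ne j j0 with hj | hj <;> rcases eq_or_ne k j0 with hk | hk
  · subst hj; subst hk; simp
  · subst hj
    simp only [Function.update_self, Function.update_of_ne hk]
    exact Nat.add_le_add_right (hmin k) 1
  · subst hk
    simp only [Function.update_self, Function.update_of_ne hj]
    have := hbal j k
    omega
  · simp only [Function.update_of_ne hj, Function.update_of_ne hk]
    exact hbal j k

lemma pickMin_min {m : ℕ} {s : SSState m} {v : ℝ} {j : Fin m}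
    (h : pickMin s v = some j) : ∀ k, (s j).2 ≤ (s k).2 := by
  unfold pickMin at h
  have hmem : j ∈ (Finset.univ.filter fun j => ∀ k, (s j).2 ≤ (s k).2).sort (· ≤ ·) :=
    List.mem_of_getElem? h
  rw [Finset.mem_sort] at hmem
  exact (Finset.mem_filter.mp hmem).2

lemma pickMin_isSome {m : ℕ} (hm : 0 < m) (s : SSState m) (v : ℝ) :
    ∃ j, pickMin s v = some j := by
  unfold pickMin
  set l := (Finset.univ.filter fun j => ∀ k, (s j).2 ≤ (s k).2).sort (· ≤ ·) with hl
  have : ∃ j : Fin m, ∀ k, (s j).2 ≤ (s k).2 := by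
    haveI : Nonempty (Fin m) := ⟨⟨0, hm⟩⟩
    obtain ⟨j, -, hj⟩ := Finset.exists_min_image Finset.univ (fun j => (s j).2) ⟨⟨0, hm⟩, Finset.mem_univ _⟩
    exact ⟨j, fun k => hj k (Finset.mem_univ _)⟩
  obtain ⟨j, hj⟩ := this
  have hlen : 0 < l.length := by
    rw [hl, Finset.length_sort]
    exact Finset.card_pos.mpr ⟨j, Finset.mem_filter.mpr ⟨Finset.mem_univ _, hj⟩⟩
  have hidx : min (⌊v * l.length⌋.toNat) (l.length - 1) < l.length := by
    have : l.length - 1 < l.length := Nat.sub_lt hlen one_pos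
    exact lt_of_le_of_lt (min_le_right _ _) this
  exact ⟨l.get ⟨_, hidx⟩, List.getElem?_eq_getElem hidx⟩

lemma ssUpdate_of_not_label {m : ℕ} {s : SSState m} {y : ℕ} (u v : ℝ)
    (h : ¬ ∃ j, (s j).1 = some y) {j0 : Fin m} (hj : pickMin s v = some j0) :
    ssUpdate y u v s = Function.update s j0
      ((if u < 1 / (((s j0).2 : ℝ) + 1) then some y else (s j0).1), (s j0).2 + 1) := by
  unfold ssUpdate
  rw [if_neg h, hj]

lemma isLabel_ssUpdate_self {m : ℕ} {s : SSState m} {i : ℕ} (u v : ℝ)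
    (h : isLabel s i) : isLabel (ssUpdate i u v s) i := by
  obtain ⟨j, hj⟩ := h
  unfold ssUpdate
  rw [if_pos ⟨j, hj⟩]
  exact ⟨j, by simp [hj]⟩

/-- Phase 1 invariant. -/

lemma phase1 {m : ℕ} (hm : 0 < m) (x : ℕ → ℕ) (u v : ℕ → ℝ) (t0 : ℕ)
    (hdistinct : ∀ r r', r < t0 → r' < t0 → r ≠ r' → x r ≠ x r') :
    ∀ t, t ≤ t0 →
      (∑ j, ((ssRun m x u v t) j).2 = t) ∧
      (∀ j k, ((ssRun m x u v t) j).2 ≤ ((ssRun m x u v t) k).2 + 1) ∧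
      (∀ j y, ((ssRun m x u v t) j).1 = some y → ∃ r, r < t ∧ x r = y) := by
  intro t
  induction t with
  | zero => intro _; refine ⟨by simp [ssRun, initState], by simp [ssRun, initState], ?_⟩
            intro j y h; simp [ssRun, initState] at h
  | succ t ih =>
    intro ht
    obtain ⟨hsum, hbal, hlab⟩ := ih (Nat.le_of_succ_le ht)
    set s := ssRun m x u v t with hs
    have hnot : ¬ ∃ j, (s j).1 = some (x t) := by
      rintro ⟨j, hj⟩
      obtain ⟨r, hr, hrx⟩ := hlab j (x t) hj
      exact hdistinct r t (by omega) (by omega) (by omega) hrx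
    obtain ⟨j0, hj0⟩ := pickMin_isSome hm s (v t)
    have hminj := pickMin_min hj0
    have hstep : ssRun m x u v (t+1) = Function.update s j0
        ((if u t < 1 / (((s j0).2 : ℝ) + 1) then some (x t) else (s j0).1), (s j0).2 + 1) := by
      show ssUpdate (x t) (u t) (v t) s = _
      exact ssUpdate_of_not_label _ _ hnot hj0
    rw [hstep]
    refine ⟨update_sum hm hsum j0 _, update_bal hbal hminj _, ?_⟩
    intro j y hjy
    rcases eq_or_ne j j0 with h|h
    · rw [h, Function.update_self] at hjy
      simp only at hjy
      split at hjy
      · exact ⟨t, Nat.lt_succ_self t, Option.some.inj hjy⟩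
      · obtain ⟨r, hr, hrx⟩ := hlab j0 y hjy
        exact ⟨r, by omega, hrx⟩
    · rw [Function.update_of_ne h] at hjy
      obtain ⟨r, hr, hrx⟩ := hlab j y hjy
      exact ⟨r, by omega, hrx⟩

lemma phase1_final {m : ℕ} (hm : 0 < m) (x : ℕ → ℕ) (u v : ℕ → ℝ) (t0 a i : ℕ)
    (ht0 : t0 = m * a)
    (hdistinct : ∀ r r', r < t0 → r' < t0 → r ≠ r' → x r ≠ x r')
    (hne : ∀ r, r < t0 → x r ≠ i) :
    (∀ j, ((ssRun m x u v t0) j).2 = a) ∧ (∀ j, ((ssRun m x u v t0) j).1 ≠ some i) := by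
  obtain ⟨hsum, hbal, hlab⟩ := phase1 hm x u v t0 hdistinct t0 le_rfl
  set s := ssRun m x u v t0 with hs
  obtain ⟨j0, hj0⟩ := pickMin_isSome hm s 0
  have hmin := pickMin_min hj0
  have hj0a : (s j0).2 = a := by
    have := min_count_eq hm hsum hbal hmin
    rw [this, ht0, Nat.mul_div_cancel_left a hm]
  have hge : ∀ k, a ≤ (s k).2 := fun k => hj0a ▸ hmin k
  have hcnt : ∀ j, (s j).2 = a := all_counts_eq hm (by rw [hsum, ht0]) hge
  refine ⟨hcnt, fun j hji => ?_⟩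
  obtain ⟨r, hr, hrx⟩ := hlab j i hji
  exact hne r hr hrx

lemma phase2 {m : ℕ} (hm : 0 < m) (x : ℕ → ℕ) (u v : ℕ → ℝ) (i t0 a ni : ℕ)
    (ht0 : t0 = m * a)
    (hxi : ∀ s', s' < ni → x (t0 + s') = i)
    (hstart_cnt : ∀ j, ((ssRun m x u v t0) j).2 = a)
    (hstart_lab : ∀ j, ((ssRun m x u v t0) j).1 ≠ some i) :
    ∀ s, s ≤ ni →
      ((¬ isLabel (ssRun m x u v (t0 + s)) i) ↔
        ∀ s', s' < s → ¬ (u (t0 + s') < 1 / (((a + s' / m : ℕ) : ℝ) + 1))) ∧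
      ((¬ isLabel (ssRun m x u v (t0 + s)) i) →
        (∑ j, ((ssRun m x u v (t0 + s)) j).2 = t0 + s) ∧
        (∀ j k, ((ssRun m x u v (t0 + s)) j).2 ≤ ((ssRun m x u v (t0 + s)) k).2 + 1) ∧
        (∀ j, ((ssRun m x u v (t0 + s)) j).1 ≠ some i)) := by
  intro s
  induction s with
  | zero =>
    intro _
    simp only [Nat.add_zero]
    refine ⟨⟨fun _ s' hs' => absurd hs' (Nat.not_lt_zero _), fun _ => ?_⟩, fun _ => ?_⟩
    · rintro ⟨j, hj⟩; exact hstart_lab j hj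
    · refine ⟨?_, fun j k => ?_, hstart_lab⟩
      · have h1 : ∑ j, ((ssRun m x u v t0) j).2 = ∑ _j : Fin m, a :=
          Finset.sum_congr rfl fun j _ => hstart_cnt j
        rw [h1, Finset.sum_const, Finset.card_univ, Fintype.card_fin, smul_eq_mul, ht0]
      · rw [hstart_cnt, hstart_cnt]; omega
  | succ s ih =>
    intro hs
    obtain ⟨ihiff, ihinv⟩ := ih (by omega)
    have hxis : x (t0 + s) = i := hxi s (by omega)
    have hrun : ssRun m x u v (t0 + (s + 1))
        = ssUpdate (x (t0 + s)) (u (t0 + s)) (v (t0 + s)) (ssRun m x u v (t0 + s)) := by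
      show ssRun m x u v ((t0 + s) + 1) = _
      rfl
    by_cases hL : isLabel (ssRun m x u v (t0 + s)) i
    · have hL' : isLabel (ssRun m x u v (t0 + (s + 1))) i := by
        rw [hrun, hxis]
        exact isLabel_ssUpdate_self _ _ hL
      refine ⟨⟨fun h => absurd hL' h, fun hR => absurd (ihiff.mpr fun s' hs' => hR s' (by omega)) (not_not.mpr hL)⟩,
        fun h => absurd hL' h⟩
    · obtain ⟨hsum, hbal, hlabs⟩ := ihinv hL
      set σ := ssRun m x u v (t0 + s) with hσ
      have hnot : ¬ ∃ j, (σ j).1 = some i := hL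
      obtain ⟨j0, hj0⟩ := pickMin_isSome hm σ (v (t0 + s))
      have hminj := pickMin_min hj0
      have hcnt : (σ j0).2 = a + s / m := by
        rw [min_count_eq hm hsum hbal hminj, ht0, Nat.mul_add_div hm]
      have hstep : ssRun m x u v (t0 + (s + 1)) = Function.update σ j0
          ((if u (t0 + s) < 1 / (((a + s / m : ℕ) : ℝ) + 1) then some i else (σ j0).1),
            (σ j0).2 + 1) := by
        rw [hrun, hxis, ssUpdate_of_not_label _ _ hnot hj0, hcnt]
      by_cases hu : u (t0 + s) < 1 / (((a + s / m : ℕ) : ℝ) + 1)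
      · have hL' : isLabel (ssRun m x u v (t0 + (s + 1))) i := by
          rw [hstep]
          refine ⟨j0, ?_⟩
          rw [Function.update_self]
          simp only [if_pos hu]
        refine ⟨⟨fun h => absurd hL' h, fun hR => absurd hu (hR s (by omega))⟩,
          fun h => absurd hL' h⟩
      · have hnL' : ¬ isLabel (ssRun m x u v (t0 + (s + 1))) i := by
          rw [hstep]
          rintro ⟨j, hj⟩
          rcases eq_or_ne j j0 with h | h
          · rw [h, Function.update_self] at hj
            simp only [if_neg hu] at hj
            exact hlabs j0 hj
          · rw [Function.update_of_ne h] at hj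
            exact hlabs j hj
        have hR' : ∀ s', s' < s + 1 → ¬ (u (t0 + s') < 1 / (((a + s' / m : ℕ) : ℝ) + 1)) := by
          intro s' hs'
          rcases Nat.lt_succ_iff_lt_or_eq.mp hs' with h | h
          · exact ihiff.mp hL s' h
          · subst h; exact hu
        refine ⟨⟨fun _ => hR', fun _ => hnL'⟩, fun _ => ?_⟩
        rw [hstep]
        refine ⟨?_, update_bal hbal hminj _, ?_⟩
        · have := update_sum hm hsum j0
            ((if u (t0 + s) < 1 / (((a + s / m : ℕ) : ℝ) + 1) then some i else (σ j0).1))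
          rw [this]
          omega
        · intro j
          rcases eq_or_ne j j0 with h | h
          · rw [h, Function.update_self]
            simp only [if_neg hu]
            exact hlabs j0
          · rw [Function.update_of_ne h]
            exact hlabs j

lemma pathwise {m : ℕ} (hm : 0 < m) (x : ℕ → ℕ) (u v : ℕ → ℝ) (i t0 a ni : ℕ)
    (ht0 : t0 = m * a)
    (hdistinct : ∀ r r', r < t0 → r' < t0 → r ≠ r' → x r ≠ x r')
    (hne : ∀ r, r < t0 → x r ≠ i)
    (hxi : ∀ s', s' < ni → x (t0 + s') = i) :
    (¬ isLabel (ssRun m x u v (t0 + ni)) i) ↔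
      ∀ s, s < ni → 1 / (((a + s / m : ℕ) : ℝ) + 1) ≤ u (t0 + s) := by
  obtain ⟨hcnt, hlab⟩ := phase1_final hm x u v t0 a i ht0 hdistinct hne
  have h := (phase2 hm x u v i t0 a ni ht0 hxi hcnt hlab ni le_rfl).1
  simpa [not_lt] using h

instance : IsFiniteMeasure unif01 := by
  constructor
  rw [unif01, Measure.restrict_apply MeasurableSet.univ, Set.univ_inter, Real.volume_Ico]
  simp

lemma unif01_prod_halfplane {c : ℝ} (h0 : 0 ≤ c) (h1 : c ≤ 1) :
    (unif01.prod unif01) {p : ℝ × ℝ | c ≤ p.1} = ENNReal.ofReal (1 - c) := by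
  have hset : {p : ℝ × ℝ | c ≤ p.1} = (Set.Ici c) ×ˢ (Set.univ : Set ℝ) := by
    ext p; simp [Set.mem_prod]
  rw [hset, Measure.prod_prod]
  have h2 : unif01 Set.univ = 1 := by
    rw [unif01, Measure.restrict_apply MeasurableSet.univ, Set.univ_inter, Real.volume_Ico]
    simp
  have h3 : unif01 (Set.Ici c) = ENNReal.ofReal (1 - c) := by
    rw [unif01, Measure.restrict_apply measurableSet_Ici]
    have : Set.Ici c ∩ Set.Ico 0 1 = Set.Ico c 1 := by
      ext y
      simp only [Set.mem_inter_iff, Set.mem_Ici, Set.mem_Ico]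
      constructor
      · rintro ⟨hy, -, hy1⟩; exact ⟨hy, hy1⟩
      · rintro ⟨hy, hy1⟩; exact ⟨hy, le_trans h0 hy, hy1⟩
    rw [this, Real.volume_Ico]
  rw [h2, h3, mul_one]

lemma prod_div_pow (m : ℕ) (hm : 0 < m) (h : ℕ → ℝ) (b : ℕ) :
    ∏ k ∈ Finset.range (m * b), h (k / m) = ∏ q ∈ Finset.range b, (h q) ^ m := by
  induction b with
  | zero => simp
  | succ b ih =>
    rw [Nat.mul_succ, Finset.prod_range_add, ih, Finset.prod_range_succ]
    congr 1
    have : ∀ j ∈ Finset.range m, h ((m * b + j) / m) = h b := by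
      intro j hj
      rw [Finset.mem_range] at hj
      rw [Nat.mul_add_div hm, Nat.div_eq_of_lt hj, Nat.add_zero]
    rw [Finset.prod_congr rfl this, Finset.prod_const, Finset.card_range]

lemma telescope (a : ℕ) (ha : 0 < a) (b : ℕ) :
    ∏ q ∈ Finset.range b, (1 - 1 / ((a : ℝ) + q + 1)) = a / (a + b) := by
  induction b with
  | zero => simp [div_self, ne_of_gt (by positivity : (0:ℝ) < (a:ℝ))]
  | succ b ih =>
    rw [Finset.prod_range_succ, ih]
    have h1 : (0:ℝ) < a + b := by positivity
    have h2 : (0:ℝ) < (a:ℝ) + b + 1 := by positivity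
    push_cast
    field_simp
    ring_nf

/-- tightness of the worst-case inclusion bound.  Suppose
`m` divides both `ni` and `ntot`, and the input sequence consists of
`ntot − ni` pairwise distinct items (all different from `i`) followed by `ni`
consecutive copies of item `i`.  Then the probability that item `i` is a label
of the Unbiased Space Saving sketch after the `ntot` rows is exactly
`1 − (1 − ni/ntot)^m`. -/
theorem worst_case_inclusion_probability_tight
    {Ω : Type*} [MeasurableSpace Ω] (P : Measure Ω) [IsProbabilityMeasure P]
    (m : ℕ) (hm : 0 < m)
    (U V : ℕ → Ω → ℝ)
    (hmeas : ∀ t, Measurable fun ω => (U t ω, V t ω))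
    (hindep : iIndepFun (fun t ω => (U t ω, V t ω)) P)
    (hlaw : ∀ t, Measure.map (fun ω => (U t ω, V t ω)) P = unif01.prod unif01)
    (i ni ntot : ℕ) (hni : ni ≤ ntot) (hntot : 0 < ntot)
    (hdvd1 : m ∣ ni) (hdvd2 : m ∣ ntot)
    (x : ℕ → ℕ)
    (hne : ∀ r, r < ntot - ni → x r ≠ i)
    (hdistinct : ∀ r r', r < ntot - ni → r' < ntot - ni → r ≠ r' → x r ≠ x r')
    (hlast : ∀ r, ntot - ni ≤ r → r < ntot → x r = i) :
    (P {ω | isLabel (ssRun m x (fun r => U r ω) (fun r => V r ω) ntot) i}).toReal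
      = 1 - (1 - (ni : ℝ) / ntot) ^ m := by
  obtain ⟨a, ha⟩ : m ∣ ntot - ni := Nat.dvd_sub hdvd2 hdvd1
  obtain ⟨b, hb⟩ := hdvd1
  set t0 := ntot - ni with ht0def
  have htot : t0 + ni = ntot := Nat.sub_add_cancel hni
  have hxi : ∀ s', s' < ni → x (t0 + s') = i :=
    fun s' hs' => hlast _ (Nat.le_add_right _ _) (by omega)
  have key : ∀ u v : ℕ → ℝ,
      (¬ isLabel (ssRun m x u v ntot) i) ↔
        ∀ s, s < ni → 1 / (((a + s / m : ℕ) : ℝ) + 1) ≤ u (t0 + s) := by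
    intro u v
    rw [← htot]
    exact pathwise hm x u v i t0 a ni ha hdistinct hne hxi
  set A : ℕ → Set (ℝ × ℝ) :=
    fun t => {p : ℝ × ℝ | 1 / (((a + (t - t0) / m : ℕ) : ℝ) + 1) ≤ p.1} with hA
  have hAmeas : ∀ t, MeasurableSet (A t) :=
    fun t => measurableSet_le measurable_const measurable_fst
  have hset : {ω | isLabel (ssRun m x (fun r => U r ω) (fun r => V r ω) ntot) i}ᶜ
      = ⋂ t ∈ Finset.Ico t0 (t0 + ni), (fun ω => (U t ω, V t ω)) ⁻¹' A t := by
    ext ω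
    simp only [Set.mem_compl_iff, Set.mem_setOf_eq, Set.mem_iInter, Set.mem_preimage,
      Finset.mem_Ico, hA]
    rw [key]
    constructor
    · intro h t ht
      have h2 := h (t - t0) (by omega)
      rwa [Nat.add_sub_cancel' ht.1] at h2
    · intro h s hs
      have h2 := h (t0 + s) ⟨Nat.le_add_right _ _, by omega⟩
      rwa [Nat.add_sub_cancel_left] at h2
  have hprod := (iIndepFun_iff_measure_inter_preimage_eq_mul.mp hindep)
      (Finset.Ico t0 (t0 + ni)) (sets := A) (fun t _ => hAmeas t)
  have hfac : ∀ t, (P ((fun ω => (U t ω, V t ω)) ⁻¹' A t))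
      = ENNReal.ofReal (1 - 1 / (((a + (t - t0) / m : ℕ) : ℝ) + 1)) := by
    intro t
    rw [← Measure.map_apply (hmeas t) (hAmeas t), hlaw t]
    have hk : (0:ℝ) ≤ ((a + (t - t0) / m : ℕ) : ℝ) := Nat.cast_nonneg _
    exact unif01_prod_halfplane (by positivity)
      (by rw [div_le_one (by positivity)]; linarith)
  have hnonneg : ∀ t : ℕ, 0 ≤ 1 - 1 / (((a + (t - t0) / m : ℕ) : ℝ) + 1) := by
    intro t
    have hk : (0:ℝ) ≤ ((a + (t - t0) / m : ℕ) : ℝ) := Nat.cast_nonneg _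
    have : 1 / (((a + (t - t0) / m : ℕ) : ℝ) + 1) ≤ 1 := by
      rw [div_le_one (by positivity)]; linarith
    linarith
  have hPint : P (⋂ t ∈ Finset.Ico t0 (t0 + ni), (fun ω => (U t ω, V t ω)) ⁻¹' A t)
      = ENNReal.ofReal (∏ t ∈ Finset.Ico t0 (t0 + ni),
          (1 - 1 / (((a + (t - t0) / m : ℕ) : ℝ) + 1))) := by
    rw [hprod, ENNReal.ofReal_prod_of_nonneg (fun t _ => hnonneg t)]
    exact Finset.prod_congr rfl fun t _ => hfac t
  -- the real product
  have hr : ∏ t ∈ Finset.Ico t0 (t0 + ni), (1 - 1 / (((a + (t - t0) / m : ℕ) : ℝ) + 1))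
      = (1 - (ni : ℝ) / ntot) ^ m := by
    rw [Finset.prod_Ico_eq_prod_range]
    simp only [Nat.add_sub_cancel_left]
    rw [hb, prod_div_pow m hm (fun q => 1 - 1 / (((a + q : ℕ) : ℝ) + 1)) b]
    rcases Nat.eq_zero_or_pos a with haz | hap
    · -- ni = ntot
      have ht00 : t0 = 0 := by rw [ha, haz, Nat.mul_zero]
      have hbpos : 0 < b := by
        rcases Nat.eq_zero_or_pos b with h0 | h
        · rw [h0, Nat.mul_zero] at hb
          omega
        · exact h
      have hzero : (1 - 1 / (((a + 0 : ℕ) : ℝ) + 1)) ^ m = 0 := by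
        rw [haz]; norm_num; exact hm.ne'
      rw [Finset.prod_eq_zero (Finset.mem_range.mpr hbpos) hzero]
      rw [← hb]
      have h1 : (ni : ℝ) / ntot = 1 := by
        have h2 : ni = ntot := by omega
        rw [h2, div_self (by exact_mod_cast hntot.ne')]
      rw [h1]
      simp [zero_pow hm.ne']
    · have hcast : ∀ q ∈ Finset.range b,
          (1 - 1 / (((a + q : ℕ) : ℝ) + 1)) ^ m = (1 - 1 / ((a : ℝ) + q + 1)) ^ m := by
        intro q _; push_cast; ring_nf
      rw [Finset.prod_congr rfl hcast, Finset.prod_pow, telescope a hap b]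
      congr 1
      have hntotn : ntot = m * a + m * b := by omega
      have hntotr : (ntot : ℝ) = m * ((a:ℝ) + b) := by
        rw [hntotn]; push_cast; ring
      have hab : (0:ℝ) < (a : ℝ) + b := by
        have : (0:ℝ) < (a:ℝ) := by exact_mod_cast hap
        positivity
      rw [hntotr]
      have hm' : (0:ℝ) < (m:ℝ) := by exact_mod_cast hm
      push_cast
      field_simp
      ring
  -- final assembly
  have hlabel_eq : {ω | isLabel (ssRun m x (fun r => U r ω) (fun r => V r ω) ntot) i}
      = (⋂ t ∈ Finset.Ico t0 (t0 + ni), (fun ω => (U t ω, V t ω)) ⁻¹' A t)ᶜ := by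
    rw [← hset, compl_compl]
  have hPmeas : MeasurableSet (⋂ t ∈ Finset.Ico t0 (t0 + ni),
      (fun ω => (U t ω, V t ω)) ⁻¹' A t) :=
    MeasurableSet.biInter (Finset.Ico t0 (t0 + ni)).countable_toSet
      (fun t _ => (hmeas t) (hAmeas t))
  rw [hlabel_eq, prob_compl_eq_one_sub hPmeas, hPint, hr]
  have hple : (1 - (ni : ℝ) / ntot) ^ m ≤ 1 := by
    apply pow_le_one₀
    · have : (ni : ℝ) / ntot ≤ 1 := by
        rw [div_le_one (by exact_mod_cast hntot)]; exact_mod_cast hni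
      have h0 : (0:ℝ) ≤ (ni:ℝ)/ntot := by positivity
      linarith
    · have h0 : (0:ℝ) ≤ (ni:ℝ)/ntot := by positivity
      linarith
  have hpnn : 0 ≤ (1 - (ni : ℝ) / ntot) ^ m := by
    apply pow_nonneg
    have : (ni : ℝ) / ntot ≤ 1 := by
      rw [div_le_one (by exact_mod_cast hntot)]; exact_mod_cast hni
    linarith
  rw [ENNReal.toReal_sub_of_le (ENNReal.ofReal_le_one.mpr hple) ENNReal.one_ne_top]
  rw [ENNReal.toReal_one, ENNReal.toReal_ofReal hpnn]
end
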